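/- Let Γ be a countable group and Δ ≤ Γ a finitely generated subgroup. Then Δ is a boomerang subgroup of Γ if and only if for every γ ∈ Γ there exists an integer n ≥ 1 with γ^n ∈ N_Γ(Δ), the normalizer of Δ in Γ. -/

import Mathlib

/-- The conjugation action of `γ` on subgroups: `Δ ↦ γ Δ γ⁻¹`. -/
def conjSubgroup {Γ : Type*} [Group Γ] (γ : Γ) (Δ : Subgroup Γ) : Subgroup Γ :=
  Subgroup.map (MulAut.conj γ).toMonoidHom Δ

/-- The Chabauty topology on `Subgroup Γ`: induced from the product of discrete
topologies on `Γ → Prop` via the membership indicator. -/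
def chabautyTopology (Γ : Type*) [Group Γ] : TopologicalSpace (Subgroup Γ) :=
  TopologicalSpace.induced (fun (Δ : Subgroup Γ) (g : Γ) => g ∈ Δ)
    (@Pi.topologicalSpace Γ (fun _ => Prop) (fun _ => ⊥))

/-- `γ` is a recurrent direction for `Δ`: every Chabauty-open neighbourhood `O` of `Δ`
contains `γ^n Δ γ^{-n}` for some `n ≥ 1`. -/
def IsRecurrentDirection {Γ : Type*} [Group Γ] (γ : Γ) (Δ : Subgroup Γ) : Prop :=
  ∀ O : Set (Subgroup Γ), (chabautyTopology Γ).IsOpen O → Δ ∈ O →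
    ∃ n : ℕ, 1 ≤ n ∧ conjSubgroup (γ ^ n) Δ ∈ O

/-- `Δ` is a boomerang subgroup if every `γ` is a recurrent direction for it. -/
def IsBoomerang {Γ : Type*} [Group Γ] (Δ : Subgroup Γ) : Prop :=
  ∀ γ : Γ, IsRecurrentDirection γ Δ

lemma mem_conjSubgroup {Γ : Type*} [Group Γ] (g x : Γ) (Δ : Subgroup Γ) :
    x ∈ conjSubgroup g Δ ↔ g⁻¹ * x * g ∈ Δ := by
  constructor
  · rintro ⟨y, hy, rfl⟩
    simpa [mul_assoc] using hy
  · intro h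
    exact ⟨g⁻¹ * x * g, h, by simp [mul_assoc]⟩

lemma conjSubgroup_mul {Γ : Type*} [Group Γ] (g h : Γ) (Δ : Subgroup Γ) :
    conjSubgroup g (conjSubgroup h Δ) = conjSubgroup (g * h) Δ := by
  ext x
  simp [mem_conjSubgroup, mul_assoc]

lemma conjSubgroup_mono {Γ : Type*} [Group Γ] (g : Γ) {Δ₁ Δ₂ : Subgroup Γ}
    (h : Δ₁ ≤ Δ₂) : conjSubgroup g Δ₁ ≤ conjSubgroup g Δ₂ :=
  Subgroup.map_mono h

lemma le_conj_pow {Γ : Type*} [Group Γ] (g : Γ) (Δ : Subgroup Γ)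
    (h : Δ ≤ conjSubgroup g Δ) : ∀ k : ℕ, Δ ≤ conjSubgroup (g ^ k) Δ := by
  intro k
  induction k with
  | zero => intro x hx; simpa [mem_conjSubgroup] using hx
  | succ k ih =>
    calc Δ ≤ conjSubgroup (g ^ k) Δ := ih
    _ ≤ conjSubgroup (g ^ k) (conjSubgroup g Δ) := conjSubgroup_mono _ h
    _ = conjSubgroup (g ^ (k + 1)) Δ := by rw [conjSubgroup_mul, pow_succ]

lemma conj_pow_le {Γ : Type*} [Group Γ] (g : Γ) (Δ : Subgroup Γ)
    (h : conjSubgroup g Δ ≤ Δ) : ∀ k : ℕ, conjSubgroup (g ^ k) Δ ≤ Δ := by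
  intro k
  induction k with
  | zero => intro x hx; simpa [mem_conjSubgroup] using hx
  | succ k ih =>
    calc conjSubgroup (g ^ (k + 1)) Δ = conjSubgroup (g ^ k) (conjSubgroup g Δ) := by
          rw [conjSubgroup_mul, pow_succ]
    _ ≤ conjSubgroup (g ^ k) Δ := conjSubgroup_mono _ h
    _ ≤ Δ := ih

theorem fg_boomerang_iff_powers_normalize {Γ : Type*} [Group Γ] [Countable Γ]
    (Δ : Subgroup Γ) (hfg : Δ.FG) :
    IsBoomerang Δ ↔ ∀ γ : Γ, ∃ n : ℕ, 1 ≤ n ∧ γ ^ n ∈ Subgroup.normalizer (Δ : Set Γ) := by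
  constructor
  · intro hb γ
    obtain ⟨S, hS⟩ := hfg
    -- the open set of subgroups containing S
    set O : Set (Subgroup Γ) := {Δ' | ∀ s ∈ S, s ∈ Δ'} with hO
    have hOopen : (chabautyTopology Γ).IsOpen O := by
      letI : TopologicalSpace Prop := ⊥
      have : O = (fun (Δ' : Subgroup Γ) (g : Γ) => g ∈ Δ') ⁻¹'
          (⋂ s ∈ S, {f : Γ → Prop | f s}) := by
        ext Δ'
        simp [O]
      rw [chabautyTopology, this]
      refine isOpen_induced ?_
      have hopen : ∀ s : Γ, IsOpen {f : Γ → Prop | f s} := by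
        intro s
        have : DiscreteTopology Prop := ⟨rfl⟩
        exact (@continuous_apply Γ (fun _ => Prop) (fun _ => ⊥) s).isOpen_preimage
          {p : Prop | p} (isOpen_discrete _)
      exact isOpen_biInter_finset fun s _ => hopen s
    have hΔO : Δ ∈ O := fun s hs => hS ▸ Subgroup.subset_closure hs
    have key : ∀ δ : Γ, ∃ n : ℕ, 1 ≤ n ∧ Δ ≤ conjSubgroup (δ ^ n) Δ := by
      intro δ
      obtain ⟨n, hn, hmem⟩ := hb δ O hOopen hΔO
      refine ⟨n, hn, ?_⟩
      have : Subgroup.closure (S : Set Γ) ≤ conjSubgroup (δ ^ n) Δ :=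
        (Subgroup.closure_le _).mpr fun s hs => hmem s hs
      rwa [hS] at this
    obtain ⟨n, hn, h1⟩ := key γ
    obtain ⟨m, hm, h2'⟩ := key γ⁻¹
    -- from Δ ≤ conj(γ⁻ᵐ)Δ get conj(γᵐ)Δ ≤ Δ
    have h2 : conjSubgroup (γ ^ m) Δ ≤ Δ := by
      intro x hx
      rw [mem_conjSubgroup] at hx
      have := h2' hx
      rw [mem_conjSubgroup] at this
      simpa [mul_assoc] using this
    refine ⟨n * m, Nat.one_le_iff_ne_zero.mpr (by positivity), ?_⟩
    have hle : Δ ≤ conjSubgroup (γ ^ (n * m)) Δ := by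
      have := le_conj_pow (γ ^ n) Δ h1 m
      rwa [← pow_mul] at this
    have hge : conjSubgroup (γ ^ (n * m)) Δ ≤ Δ := by
      have := conj_pow_le (γ ^ m) Δ h2 n
      rwa [← pow_mul, mul_comm m n] at this
    have heq : conjSubgroup (γ ^ (n * m)) Δ = Δ := le_antisymm hge hle
    rw [Subgroup.mem_normalizer_iff]
    intro h
    constructor
    · intro hh
      have : γ ^ (n * m) * h * (γ ^ (n * m))⁻¹ ∈ conjSubgroup (γ ^ (n * m)) Δ := by
        rw [mem_conjSubgroup]
        simpa [mul_assoc] using hh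
      rwa [heq] at this
    · intro hh
      have : γ ^ (n * m) * h * (γ ^ (n * m))⁻¹ ∈ Δ := hh
      rw [← heq, mem_conjSubgroup] at this
      simpa [mul_assoc] using this
  · intro h γ O hOopen hΔO
    obtain ⟨n, hn, hnorm⟩ := h γ
    have heq : conjSubgroup (γ ^ n) Δ = Δ := by
      ext x
      rw [mem_conjSubgroup]
      rw [Subgroup.mem_normalizer_iff] at hnorm
      simpa [mul_assoc] using hnorm ((γ ^ n)⁻¹ * x * γ ^ n)
    exact ⟨n, hn, by rwa [heq]⟩
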